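/- arXiv:0801.2531 — 4 statements merged into one kernel-verified Lean document; each statement's English description precedes it below -/
import Mathlib

section
/- The set of marginally cyclic unit vectors of H ⊗ H is a relatively open dense subset of the unit sphere S(H ⊗ H), and its complement has measure zero with respect to the unitarily invariant probability measure on the sphere. -/
open Matrix Kronecker MeasureTheory Polynomial Complex

variable {n : ℕ}



def toM (ξ : Fin n × Fin n → ℂ) : Matrix (Fin n) (Fin n) ℂ := Matrix.of fun i j => ξ (i, j)

lemma kron_mulVec (a : Matrix (Fin n) (Fin n) ℂ) (ξ : Fin n × Fin n → ℂ) :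
    (a ⊗ₖ (1 : Matrix (Fin n) (Fin n) ℂ)).mulVec ξ = fun p => (a * toM ξ) p.1 p.2 := by
  funext p
  obtain ⟨i, j⟩ := p
  simp only [Matrix.mulVec, dotProduct, Fintype.sum_prod_type, kroneckerMap_apply,
    Matrix.mul_apply, toM, Matrix.of_apply, Matrix.one_apply, mul_ite, mul_one, mul_zero]
  congr 1
  funext k
  rw [Finset.sum_eq_single j] <;> simp +contextual [eq_comm]

noncomputable def Lmap (ξ : Fin n × Fin n → ℂ) :
    Matrix (Fin n) (Fin n) ℂ →ₗ[ℂ] (Fin n × Fin n → ℂ) where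
  toFun a := fun p => (a * toM ξ) p.1 p.2
  map_add' a b := by funext p; simp [Matrix.add_mul]
  map_smul' c a := by funext p; simp [Matrix.smul_mul]

lemma surj_iff (ξ : Fin n × Fin n → ℂ) :
    Function.Surjective (Lmap ξ) ↔ (toM ξ).det ≠ 0 := by
  rw [← isUnit_iff_ne_zero, ← Matrix.isUnit_iff_isUnit_det]
  constructor
  · intro hs
    obtain ⟨a, ha⟩ := hs (fun p => (1 : Matrix (Fin n) (Fin n) ℂ) p.1 p.2)
    have : a * toM ξ = 1 := by
      ext i j
      exact congrFun ha (i, j)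
    have h2 : toM ξ * a = 1 := mul_eq_one_comm.mp this
    exact ⟨⟨toM ξ, a, h2, this⟩, rfl⟩
  · intro hu v
    refine ⟨(Matrix.of fun i j => v (i, j)) * (toM ξ)⁻¹, ?_⟩
    funext p
    show ((Matrix.of fun i j => v (i, j)) * (toM ξ)⁻¹ * toM ξ) p.1 p.2 = v p
    rw [Matrix.mul_assoc, Matrix.nonsing_inv_mul _ ((Matrix.isUnit_iff_isUnit_det _).mp hu),
      Matrix.mul_one]
    simp

lemma mc_iff (ξ : Fin n × Fin n → ℂ) :
    Submodule.span ℂ {y : Fin n × Fin n → ℂ |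
        ∃ a : Matrix (Fin n) (Fin n) ℂ,
          y = (a ⊗ₖ (1 : Matrix (Fin n) (Fin n) ℂ)).mulVec ξ} = ⊤ ↔ (toM ξ).det ≠ 0 := by
  have hset : {y : Fin n × Fin n → ℂ |
      ∃ a : Matrix (Fin n) (Fin n) ℂ,
        y = (a ⊗ₖ (1 : Matrix (Fin n) (Fin n) ℂ)).mulVec ξ} = Set.range (Lmap ξ) := by
    ext y
    simp only [Set.mem_setOf_eq, Set.mem_range, kron_mulVec]
    exact ⟨fun ⟨a, h⟩ => ⟨a, h.symm⟩, fun ⟨a, h⟩ => ⟨a, h.symm⟩⟩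
  rw [hset, ← LinearMap.coe_range, Submodule.span_eq, LinearMap.range_eq_top]
  exact surj_iff ξ




lemma eval_neg_charpoly (A : Matrix (Fin n) (Fin n) ℂ) (z : ℂ) :
    ((-A).charpoly).eval z = (z • 1 + A).det := by
  rw [Matrix.charpoly]
  have : ((-A).charmatrix.det).eval z = ((evalRingHom z) ((-A).charmatrix.det)) := rfl
  rw [this, RingHom.map_det]
  congr 1
  ext i j
  by_cases h : i = j <;>
    simp [h, Matrix.charmatrix_apply, Matrix.map_apply, Matrix.one_apply, Matrix.smul_apply]

lemma dense_lemma (hn : 0 < n) (ξ : Fin n × Fin n → ℂ)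
    (hξ : ∑ x, Complex.normSq (ξ x) = 1) :
    ξ ∈ closure {η : Fin n × Fin n → ℂ |
      (toM η).det ≠ 0 ∧ ∑ x, Complex.normSq (η x) = 1} := by
  haveI : Nonempty (Fin n) := ⟨⟨0, hn⟩⟩
  set e : Fin n × Fin n → ℂ := fun p => if p.1 = p.2 then 1 else 0 with he
  set g : ℝ → (Fin n × Fin n → ℂ) := fun r => ξ + (r : ℂ) • e with hgdef
  set s : ℝ → ℝ := fun r => ∑ x, Complex.normSq (g r x) with hsdef
  have htoMg : ∀ r : ℝ, toM (g r) = toM ξ + (r : ℂ) • 1 := by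
    intro r
    ext i j
    by_cases h : i = j <;>
      simp [toM, hgdef, he, h, Matrix.one_apply]
  have hg : Continuous g := by
    apply continuous_pi
    intro x
    exact continuous_const.add ((Complex.continuous_ofReal).mul continuous_const)
  have hs : Continuous s := by
    apply continuous_finset_sum
    intro x _
    exact Complex.continuous_normSq.comp ((continuous_apply x).comp hg)
  have hg0 : g 0 = ξ := by simp [hgdef]
  have hs0 : s 0 = 1 := by simp [hsdef, hg0, hξ]
  set F : ℝ → (Fin n × Fin n → ℂ) := fun r => (((Real.sqrt (s r))⁻¹ : ℝ) : ℂ) • g r with hFdef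
  have hF0 : F 0 = ξ := by simp [hFdef, hs0, hg0]
  have hFc : ContinuousAt F 0 := by
    refine ContinuousAt.smul (f := fun r => (((Real.sqrt (s r))⁻¹ : ℝ) : ℂ)) (g := g) ?_ ?_
    · apply Complex.continuous_ofReal.continuousAt.comp
      apply ContinuousAt.inv₀
      · exact (Real.continuous_sqrt.comp hs).continuousAt
      · simp [hs0]
    · exact hg.continuousAt
  have htend : Filter.Tendsto F (nhdsWithin 0 (Set.Ioi 0)) (nhds ξ) := by
    have := hFc.tendsto
    rw [hF0] at this
    exact this.mono_left nhdsWithin_le_nhds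
  -- the bad set
  set f : Polynomial ℂ := (-(toM ξ)).charpoly with hfdef
  have hfne : f ≠ 0 := (Matrix.charpoly_monic _).ne_zero
  set Rbad : Set ℝ := {r : ℝ | f.eval ((r : ℝ) : ℂ) = 0} with hRdef
  have hRfin : Rbad.Finite := by
    have : Rbad = (fun r : ℝ => (r : ℂ)) ⁻¹' {z : ℂ | f.IsRoot z} := rfl
    rw [this]
    exact Set.Finite.preimage (Set.injOn_of_injective Complex.ofReal_injective)
      (f.finite_setOf_isRoot hfne)
  have hcompl : Rbadᶜ ∈ nhdsWithin (0:ℝ) (Set.Ioi 0) := by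
    have hU : (Rbad \ {0})ᶜ ∈ nhds (0:ℝ) := by
      refine ((hRfin.subset Set.diff_subset).isClosed.isOpen_compl).mem_nhds ?_
      simp [hRdef, hfdef]
    filter_upwards [mem_nhdsWithin_of_mem_nhds hU, self_mem_nhdsWithin] with r hr hr0
    intro hrR
    exact hr ⟨hrR, by exact ne_of_gt hr0⟩
  have hev : ∀ᶠ r in nhdsWithin (0:ℝ) (Set.Ioi 0),
      F r ∈ {η : Fin n × Fin n → ℂ | (toM η).det ≠ 0 ∧ ∑ x, Complex.normSq (η x) = 1} := by
    filter_upwards [hcompl, self_mem_nhdsWithin] with r hrR hr0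
    have hdetg : (toM (g r)).det ≠ 0 := by
      rw [htoMg r]
      intro h
      apply hrR
      show f.eval ((r : ℝ) : ℂ) = 0
      rw [eval_neg_charpoly]
      rwa [add_comm] at h
    have hgne : g r ≠ 0 := by
      intro h
      apply hdetg
      rw [h]
      have h0 : toM (0 : Fin n × Fin n → ℂ) = 0 := by ext i j; simp [toM]
      rw [h0, Matrix.det_zero]
    have hspos : 0 < s r := by
      rcases Function.ne_iff.mp hgne with ⟨x, hx⟩
      refine Finset.sum_pos' (fun y _ => Complex.normSq_nonneg _)
        ⟨x, Finset.mem_univ x, Complex.normSq_pos.mpr hx⟩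
    have hc : Real.sqrt (s r) ≠ 0 := ne_of_gt (Real.sqrt_pos.mpr hspos)
    constructor
    · have hFM : toM (F r) = ((((Real.sqrt (s r))⁻¹ : ℝ) : ℂ)) • toM (g r) := by
        ext i j
        simp [toM, hFdef]
      rw [hFM, Matrix.det_smul]
      refine mul_ne_zero (pow_ne_zero _ ?_) hdetg
      simpa using hc
    · have : ∀ x, Complex.normSq (F r x) =
          ((Real.sqrt (s r))⁻¹ * (Real.sqrt (s r))⁻¹) * Complex.normSq (g r x) := by
        intro x
        simp only [hFdef, Pi.smul_apply, smul_eq_mul, Complex.normSq_mul,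
          Complex.normSq_ofReal]
      rw [Finset.sum_congr rfl (fun x _ => this x), ← Finset.mul_sum]
      rw [← mul_inv, Real.mul_self_sqrt hspos.le]
      field_simp
      rfl
  exact mem_closure_of_frequently_of_tendsto hev.frequently htend


lemma countable_exp_eq (z : ℂ) : {θ : ℝ | Complex.exp ((θ : ℂ) * Complex.I) = z}.Countable := by
  rcases Set.eq_empty_or_nonempty {θ : ℝ | Complex.exp ((θ : ℂ) * Complex.I) = z} with h | ⟨θ₀, hθ₀⟩
  · rw [h]; exact Set.countable_empty
  · have hsub : {θ : ℝ | Complex.exp ((θ : ℂ) * Complex.I) = z} ⊆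
        Set.range (fun k : ℤ => θ₀ + k * (2 * Real.pi)) := by
      intro θ hθ
      have : Complex.exp ((θ : ℂ) * Complex.I) = Complex.exp ((θ₀ : ℂ) * Complex.I) := by
        rw [hθ, hθ₀]
      rw [Complex.exp_eq_exp_iff_exists_int] at this
      obtain ⟨k, hk⟩ := this
      refine ⟨k, ?_⟩
      have h2 : (θ : ℂ) * Complex.I = ((θ₀ : ℂ) + (k : ℂ) * (2 * (Real.pi : ℂ))) * Complex.I := by
        rw [hk]; ring
      have h3 : (θ : ℂ) = (θ₀ : ℂ) + (k : ℂ) * (2 * (Real.pi : ℂ)) :=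
        mul_right_cancel₀ Complex.I_ne_zero h2
      have h4 : ((θ₀ + (k : ℝ) * (2 * Real.pi) : ℝ) : ℂ) = (θ : ℂ) := by
        push_cast
        rw [h3]
      exact_mod_cast congrArg Complex.re h4
    exact Set.Countable.mono hsub (Set.countable_range _)

lemma countable_exp_root {P : Polynomial ℂ} (hP : P ≠ 0) :
    {θ : ℝ | P.eval (Complex.exp ((θ : ℂ) * Complex.I)) = 0}.Countable := by
  have hsub : {θ : ℝ | P.eval (Complex.exp ((θ : ℂ) * Complex.I)) = 0} ⊆
      ⋃ z ∈ {z : ℂ | P.IsRoot z}, {θ : ℝ | Complex.exp ((θ : ℂ) * Complex.I) = z} := by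
    intro θ hθ
    exact Set.mem_biUnion hθ rfl
  exact Set.Countable.mono hsub
    (Set.Countable.biUnion ((P.finite_setOf_isRoot hP).countable) fun z _ => countable_exp_eq z)



noncomputable def Wm (n : ℕ) : Matrix (Fin n × Fin n) (Fin n × Fin n) ℂ :=
  1 - (2 / ((n : ℂ) * n)) • Matrix.of (fun _ _ => 1)

lemma nn_ne_two (hn : 0 < n) : (n : ℂ) * n ≠ 2 := by
  have : n * n ≠ 2 := by
    rcases Nat.lt_or_ge n 2 with h | h
    · interval_cases n <;> omega
    · nlinarith
  intro h
  apply this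
  have : ((n * n : ℕ) : ℂ) = ((2 : ℕ) : ℂ) := by push_cast; simpa using h
  exact_mod_cast this

lemma Wm_star (n : ℕ) : star (Wm n) = Wm n := by
  show (Wm n)ᴴ = Wm n
  ext i j
  by_cases h : i = j <;>
    simp [Wm, Matrix.conjTranspose_apply, Matrix.one_apply, Matrix.sub_apply, Matrix.smul_apply,
      h, eq_comm, starRingEnd_apply, star_div₀, ← starRingEnd_apply, Complex.conj_natCast,
      Complex.conj_ofNat]

lemma Wm_mul_self (hn : 0 < n) : Wm n * Wm n = 1 := by
  have hn' : (n : ℂ) ≠ 0 := Nat.cast_ne_zero.mpr hn.ne'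
  have hN : ((n : ℂ) * n) ≠ 0 := mul_ne_zero hn' hn'
  set c : ℂ := 2 / ((n : ℂ) * n) with hc
  set J : Matrix (Fin n × Fin n) (Fin n × Fin n) ℂ := Matrix.of (fun _ _ => 1) with hJ
  have hJJ : J * J = ((n : ℂ) * n) • J := by
    ext i j
    simp [hJ, Matrix.mul_apply, Finset.card_univ]
  have hW : Wm n = 1 - c • J := rfl
  have hCC : (c • J) * (c • J) = c • J + c • J := by
    rw [Matrix.smul_mul, Matrix.mul_smul, hJJ, smul_smul, smul_smul]
    have h2 : c * c * ((n:ℂ) * n) = c + c := by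
      rw [hc]; field_simp; ring
    rw [h2, add_smul]
  rw [hW]
  have expand : ∀ A : Matrix (Fin n × Fin n) (Fin n × Fin n) ℂ,
      (1 - A) * (1 - A) = 1 - A - A + A * A := by
    intro A
    rw [sub_mul, one_mul, mul_sub, mul_one]
    abel
  rw [expand, hCC]
  abel

lemma Wm_mem (hn : 0 < n) : Wm n ∈ Matrix.unitaryGroup (Fin n × Fin n) ℂ := by
  rw [Matrix.mem_unitaryGroup_iff, Wm_star, Wm_mul_self hn]

lemma Wm_ne (hn : 0 < n) (y x : Fin n × Fin n) : Wm n y x ≠ 0 := by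
  have hn' : (n : ℂ) ≠ 0 := Nat.cast_ne_zero.mpr hn.ne'
  have hN : ((n : ℂ) * n) ≠ 0 := mul_ne_zero hn' hn'
  unfold Wm
  by_cases h : y = x
  · simp only [Matrix.sub_apply, Matrix.one_apply, h, if_pos rfl, Matrix.smul_apply,
      Matrix.of_apply, smul_eq_mul, mul_one]
    intro hh
    rw [sub_eq_zero] at hh
    rw [eq_comm, div_eq_iff hN, if_pos trivial, one_mul] at hh
    exact nn_ne_two hn hh.symm
  · simp only [Matrix.sub_apply, Matrix.one_apply, if_neg h, Matrix.smul_apply,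
      Matrix.of_apply, smul_eq_mul, mul_one, zero_sub, neg_ne_zero]
    exact div_ne_zero two_ne_zero hN

noncomputable def Dm (v : Fin n × Fin n → ℝ) : Matrix (Fin n × Fin n) (Fin n × Fin n) ℂ :=
  Matrix.diagonal fun x => Complex.exp ((v x : ℂ) * Complex.I)

lemma Dm_mem (v : Fin n × Fin n → ℝ) : Dm v ∈ Matrix.unitaryGroup (Fin n × Fin n) ℂ := by
  rw [Matrix.mem_unitaryGroup_iff]
  show Dm v * (Dm v)ᴴ = 1
  rw [Dm, Matrix.diagonal_conjTranspose, Matrix.diagonal_mul_diagonal]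
  have : ∀ x : Fin n × Fin n,
      Complex.exp ((v x : ℂ) * Complex.I) * star (Complex.exp ((v x : ℂ) * Complex.I)) = 1 := by
    intro x
    have : star (Complex.exp ((v x : ℂ) * Complex.I)) = Complex.exp (-((v x : ℂ) * Complex.I)) := by
      rw [Complex.star_def, ← Complex.exp_conj]
      congr 1
      simp [_root_.map_mul, Complex.conj_I, Complex.conj_ofReal]
    rw [this, ← Complex.exp_add, add_neg_cancel, Complex.exp_zero]
  have h2 : (fun i => Complex.exp ((v i : ℂ) * Complex.I) *
      (star fun x => Complex.exp ((v x : ℂ) * Complex.I)) i) = fun _ => (1:ℂ) := by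
    funext x
    exact this x
  rw [h2, Matrix.diagonal_one]

def cN (x : Fin n × Fin n) : ℕ := ((x.1 : ℤ) - (x.2 : ℤ)).natAbs

noncomputable def pPoly (η : Fin n × Fin n → ℂ) : Polynomial ℂ :=
  ∑ σ : Equiv.Perm (Fin n), Polynomial.monomial (∑ i, cN (σ i, i))
    (((Equiv.Perm.sign σ : ℤ) : ℂ) * ∏ i, η (σ i, i))

lemma det_Dm (θ : ℝ) (η : Fin n × Fin n → ℂ) :
    (toM ((Dm (fun x => θ * (cN x : ℝ))).mulVec η)).det
      = (pPoly η).eval (Complex.exp ((θ : ℂ) * Complex.I)) := by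
  rw [Matrix.det_apply', pPoly, Polynomial.eval_finset_sum]
  apply Finset.sum_congr rfl
  intro σ _
  rw [Polynomial.eval_monomial]
  have hentry : ∀ i, toM ((Dm (fun x => θ * (cN x : ℝ))).mulVec η) (σ i) i
      = Complex.exp (((θ * (cN (σ i, i) : ℝ) : ℝ) : ℂ) * Complex.I) * η (σ i, i) := by
    intro i
    show ((Dm (fun x => θ * (cN x : ℝ))).mulVec η) (σ i, i) = _
    rw [Dm, Matrix.mulVec_diagonal]
  rw [Finset.prod_congr rfl (fun i _ => hentry i), Finset.prod_mul_distrib, ← Complex.exp_sum]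
  have hsum : ∑ i, (((θ * (cN (σ i, i) : ℝ) : ℝ) : ℂ) * Complex.I)
      = ((∑ i, cN (σ i, i) : ℕ) : ℂ) * ((θ : ℂ) * Complex.I) := by
    push_cast
    rw [Finset.sum_mul]
    apply Finset.sum_congr rfl
    intro i _
    ring
  rw [hsum, Complex.exp_nat_mul]
  ring

lemma pPoly_coeff0 (η : Fin n × Fin n → ℂ) : (pPoly η).coeff 0 = ∏ i, η (i, i) := by
  rw [pPoly, Polynomial.finset_sum_coeff]
  rw [Finset.sum_eq_single (1 : Equiv.Perm (Fin n))]
  · rw [Polynomial.coeff_monomial, if_pos]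
    · simp
    · simp [cN]
  · intro σ _ hσ
    rw [Polynomial.coeff_monomial, if_neg]
    intro h
    apply hσ
    have hall : ∀ i ∈ Finset.univ, cN (σ i, i) = 0 :=
      (Finset.sum_eq_zero_iff).mp h
    ext i
    have := hall i (Finset.mem_univ i)
    rw [cN, Int.natAbs_eq_zero, sub_eq_zero] at this
    exact_mod_cast this
  · intro h
    exact absurd (Finset.mem_univ _) h

noncomputable def qPoly (y : Fin n × Fin n) (ξ : Fin n × Fin n → ℂ) : Polynomial ℂ :=
  ∑ x : Fin n × Fin n, Polynomial.monomial ((finProdFinEquiv x : Fin (n * n)) : ℕ)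
    (Wm n y x * ξ x)

lemma coord_eval (φ : ℝ) (ξ : Fin n × Fin n → ℂ) (y : Fin n × Fin n) :
    ((Wm n * Dm (fun x => φ * (((finProdFinEquiv x : Fin (n * n)) : ℕ) : ℝ))).mulVec ξ) y
      = (qPoly y ξ).eval (Complex.exp ((φ : ℂ) * Complex.I)) := by
  rw [← Matrix.mulVec_mulVec]
  have hd : (Dm (fun x => φ * (((finProdFinEquiv x : Fin (n * n)) : ℕ) : ℝ))).mulVec ξ
      = fun x => Complex.exp (((φ * (((finProdFinEquiv x : Fin (n * n)) : ℕ) : ℝ) : ℝ) : ℂ)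
          * Complex.I) * ξ x := by
    funext x
    rw [Dm, Matrix.mulVec_diagonal]
  rw [hd, qPoly, Polynomial.eval_finset_sum]
  rw [Matrix.mulVec]
  show dotProduct _ _ = _
  rw [dotProduct]
  apply Finset.sum_congr rfl
  intro x _
  rw [Polynomial.eval_monomial]
  have : ((φ * (((finProdFinEquiv x : Fin (n * n)) : ℕ) : ℝ) : ℝ) : ℂ) * Complex.I
      = (((finProdFinEquiv x : Fin (n * n)) : ℕ) : ℂ) * ((φ : ℂ) * Complex.I) := by
    push_cast
    ring
  rw [this, Complex.exp_nat_mul]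
  ring

lemma qPoly_ne (hn : 0 < n) {ξ : Fin n × Fin n → ℂ} (hξ : ξ ≠ 0) (y : Fin n × Fin n) :
    qPoly y ξ ≠ 0 := by
  obtain ⟨x₀, hx₀⟩ := Function.ne_iff.mp hξ
  intro h
  have hc : (qPoly y ξ).coeff ((finProdFinEquiv x₀ : Fin (n * n)) : ℕ) = Wm n y x₀ * ξ x₀ := by
    rw [qPoly, Polynomial.finset_sum_coeff, Finset.sum_eq_single x₀]
    · rw [Polynomial.coeff_monomial, if_pos rfl]
    · intro x _ hx
      rw [Polynomial.coeff_monomial, if_neg]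
      intro hco
      exact hx (finProdFinEquiv.injective (Fin.val_injective hco))
    · intro h'
      exact absurd (Finset.mem_univ _) h'
  rw [h, Polynomial.coeff_zero] at hc
  exact mul_ne_zero (Wm_ne hn y x₀) (by simpa using hx₀) hc.symm

noncomputable def Am (n : ℕ) (q : ℝ × ℝ) : Matrix (Fin n × Fin n) (Fin n × Fin n) ℂ :=
  Dm (fun x => q.2 * (cN x : ℝ)) *
    (Wm n * Dm (fun x => q.1 * (((finProdFinEquiv x : Fin (n * n)) : ℕ) : ℝ)))

lemma Am_mem (hn : 0 < n) (q : ℝ × ℝ) : Am n q ∈ Matrix.unitaryGroup (Fin n × Fin n) ℂ :=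
  mul_mem (Dm_mem _) (mul_mem (Wm_mem hn) (Dm_mem _))

lemma continuous_Am : Continuous fun q : ℝ × ℝ => Am n q := by
  have hexp : ∀ (f : ℝ × ℝ → ℝ), Continuous f →
      Continuous fun q : ℝ × ℝ => Complex.exp ((f q : ℂ) * Complex.I) := fun f hf =>
    Complex.continuous_exp.comp ((Complex.continuous_ofReal.comp hf).mul continuous_const)
  have hD : ∀ (g : Fin n × Fin n → ℝ) (pr : ℝ × ℝ → ℝ), Continuous pr →
      Continuous fun q : ℝ × ℝ => Dm (fun x => pr q * g x) := by
    intro g pr hpr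
    apply continuous_matrix
    intro a b
    by_cases h : a = b
    · subst h
      simpa [Dm, Matrix.diagonal_apply_eq] using hexp _ (hpr.mul continuous_const)
    · simpa [Dm, Matrix.diagonal_apply_ne _ h] using continuous_const
  exact (hD _ _ continuous_snd).matrix_mul
    (continuous_const.matrix_mul (hD _ _ continuous_fst))

lemma sections_null (hn : 0 < n) {ξ : Fin n × Fin n → ℂ} (hξ : ξ ≠ 0) :
    (volume.prod volume) {q : ℝ × ℝ | (toM ((Am n q).mulVec ξ)).det = 0} = 0 := by
  have hcont : Continuous fun q : ℝ × ℝ => (toM ((Am n q).mulVec ξ)).det := by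
    have h1 : Continuous fun q : ℝ × ℝ => (Am n q).mulVec ξ :=
      continuous_Am.matrix_mulVec continuous_const
    have h2 : Continuous fun q : ℝ × ℝ => toM ((Am n q).mulVec ξ) := by
      apply continuous_matrix
      intro i j
      exact (continuous_apply (i, j)).comp h1
    exact h2.matrix_det
  have hZm : MeasurableSet {q : ℝ × ℝ | (toM ((Am n q).mulVec ξ)).det = 0} :=
    (isClosed_eq hcont continuous_const).measurableSet
  rw [Measure.measure_prod_null hZm]
  set B : Set ℝ := ⋃ i : Fin n,
    {φ : ℝ | (qPoly (i, i) ξ).eval (Complex.exp ((φ : ℂ) * Complex.I)) = 0} with hB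
  have hBc : B.Countable :=
    Set.countable_iUnion fun i => countable_exp_root (qPoly_ne hn hξ (i, i))
  have hBnull : volume B = 0 := hBc.measure_zero _
  have key : ∀ φ : ℝ, φ ∉ B →
      volume (Prod.mk φ ⁻¹' {q : ℝ × ℝ | (toM ((Am n q).mulVec ξ)).det = 0}) = 0 := by
    intro φ hφB
    set η : Fin n × Fin n → ℂ :=
      (Wm n * Dm (fun x => φ * (((finProdFinEquiv x : Fin (n * n)) : ℕ) : ℝ))).mulVec ξ with hη
    have hsec : Prod.mk φ ⁻¹' {q : ℝ × ℝ | (toM ((Am n q).mulVec ξ)).det = 0} ⊆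
        {θ : ℝ | (pPoly η).eval (Complex.exp ((θ : ℂ) * Complex.I)) = 0} := by
      intro θ hθ
      simp only [Set.mem_preimage, Set.mem_setOf_eq] at hθ ⊢
      rw [← det_Dm]
      rw [Am, ← Matrix.mulVec_mulVec] at hθ
      exact hθ
    have hηne : pPoly η ≠ 0 := by
      intro h0
      have hco : (pPoly η).coeff 0 = ∏ i, η (i, i) := pPoly_coeff0 η
      rw [h0, Polynomial.coeff_zero] at hco
      have hne : ∀ i : Fin n, η (i, i) ≠ 0 := by
        intro i
        rw [hη, coord_eval]
        intro hz
        exact hφB (Set.mem_iUnion.mpr ⟨i, hz⟩)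
      exact Finset.prod_ne_zero_iff.mpr (fun i _ => hne i) hco.symm
    exact measure_mono_null hsec ((countable_exp_root hηne).measure_zero _)
  filter_upwards [measure_eq_zero_iff_ae_notMem.mp hBnull] with φ hφ
  simpa using key φ hφ

lemma main_null (hn : 0 < n) (μ : Measure (Fin n × Fin n → ℂ)) [IsProbabilityMeasure μ]
    (hinv : ∀ U : Matrix.unitaryGroup (Fin n × Fin n) ℂ,
      μ.map (fun ξ => (U : Matrix (Fin n × Fin n) (Fin n × Fin n) ℂ).mulVec ξ) = μ)
    {N : Set (Fin n × Fin n → ℂ)} (hNm : MeasurableSet N)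
    (hN1 : ∀ ξ ∈ N, ∑ x, Complex.normSq (ξ x) = 1)
    (hN2 : ∀ ξ ∈ N, (toM ξ).det = 0) :
    μ N = 0 := by
  have hmeasA : ∀ q : ℝ × ℝ, Measurable fun ξ : Fin n × Fin n → ℂ => (Am n q).mulVec ξ :=
    fun q => (continuous_const.matrix_mulVec continuous_id).measurable
  have step1 : ∀ q : ℝ × ℝ, μ {ξ | (Am n q).mulVec ξ ∈ N} = μ N := by
    intro q
    have h := hinv ⟨Am n q, Am_mem hn q⟩
    conv_rhs => rw [← h]
    rw [Measure.map_apply (hmeasA q) hNm]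
    rfl
  set E : Set ((ℝ × ℝ) × (Fin n × Fin n → ℂ)) := {p | (Am n p.1).mulVec p.2 ∈ N} with hE
  have hEm : MeasurableSet E := by
    have hc : Continuous fun p : (ℝ × ℝ) × (Fin n × Fin n → ℂ) => (Am n p.1).mulVec p.2 :=
      (continuous_Am.comp continuous_fst).matrix_mulVec continuous_snd
    exact hNm.preimage hc.measurable
  set κ : Measure ℝ := volume.restrict (Set.Ioc (0:ℝ) 1) with hκ
  have huniv : (κ.prod κ) Set.univ = 1 := by
    rw [← Set.univ_prod_univ, Measure.prod_prod]
    simp [hκ, Real.volume_Ioc]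
  have h1 : (κ.prod κ).prod μ E = μ N := by
    rw [Measure.prod_apply hEm]
    have hq : ∀ q : ℝ × ℝ, μ (Prod.mk q ⁻¹' E) = μ N := fun q => step1 q
    rw [lintegral_congr hq, lintegral_const, huniv, mul_one]
  have h2 : (κ.prod κ).prod μ E = 0 := by
    rw [Measure.prod_apply_symm hEm]
    have hz : ∀ ξ : Fin n × Fin n → ℂ, (κ.prod κ) ((fun q => (q, ξ)) ⁻¹' E) = 0 := by
      intro ξ
      by_cases hξ : ξ = 0
      · have hem : ((fun q : ℝ × ℝ => (q, ξ)) ⁻¹' E) = ∅ := by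
          ext q
          simp only [Set.mem_preimage, hE, Set.mem_setOf_eq, hξ, Matrix.mulVec_zero,
            Set.mem_empty_iff_false, iff_false]
          intro h0
          have := hN1 0 h0
          simp at this
        rw [hem, measure_empty]
      · have hsub : ((fun q : ℝ × ℝ => (q, ξ)) ⁻¹' E) ⊆
            {q : ℝ × ℝ | (toM ((Am n q).mulVec ξ)).det = 0} := fun q hq => hN2 _ hq
        have hZ := sections_null hn hξ
        have hres : κ.prod κ = (volume.prod volume).restrict
            (Set.Ioc (0:ℝ) 1 ×ˢ Set.Ioc (0:ℝ) 1) := Measure.prod_restrict _ _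
        refine le_antisymm ?_ zero_le
        calc (κ.prod κ) ((fun q : ℝ × ℝ => (q, ξ)) ⁻¹' E)
            ≤ (κ.prod κ) {q : ℝ × ℝ | (toM ((Am n q).mulVec ξ)).det = 0} :=
              measure_mono hsub
          _ = (volume.prod volume).restrict (Set.Ioc (0:ℝ) 1 ×ˢ Set.Ioc (0:ℝ) 1)
              {q : ℝ × ℝ | (toM ((Am n q).mulVec ξ)).det = 0} := by rw [hres]
          _ ≤ (volume.prod volume) {q : ℝ × ℝ | (toM ((Am n q).mulVec ξ)).det = 0} :=
              Measure.restrict_le_self _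
          _ = 0 := hZ
    rw [lintegral_congr hz, lintegral_zero]
  rw [← h1, h2]


/-- The set of marginally cyclic unit vectors in `H ⊗ H` is
relatively open and dense in the unit sphere, and its complement in the sphere
has measure zero for the (unique) unitarily invariant probability measure. -/
theorem stmt5 (n : ℕ)
    (S : Set (Fin n × Fin n → ℂ))
    (hS : S = {ξ | ∑ x, Complex.normSq (ξ x) = 1})
    (MC : Set (Fin n × Fin n → ℂ))
    (hMC : MC = {ξ | Submodule.span ℂ {y : Fin n × Fin n → ℂ |
        ∃ a : Matrix (Fin n) (Fin n) ℂ,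
          y = (a ⊗ₖ (1 : Matrix (Fin n) (Fin n) ℂ)).mulVec ξ} = ⊤}) :
    (∃ G : Set (Fin n × Fin n → ℂ), IsOpen G ∧ MC ∩ S = G ∩ S) ∧
    S ⊆ closure (MC ∩ S) ∧
    ∀ μ : Measure (Fin n × Fin n → ℂ), IsProbabilityMeasure μ → μ S = 1 →
      (∀ U : Matrix.unitaryGroup (Fin n × Fin n) ℂ,
        μ.map (fun ξ => (U : Matrix (Fin n × Fin n) (Fin n × Fin n) ℂ).mulVec ξ) = μ) →
      μ (S \ MC) = 0 := by
  have hMCeq : MC = {ξ : Fin n × Fin n → ℂ | (toM ξ).det ≠ 0} := by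
    rw [hMC]
    ext ξ
    exact mc_iff ξ
  have hdetc : Continuous fun ξ : Fin n × Fin n → ℂ => (toM ξ).det := by
    have : Continuous fun ξ : Fin n × Fin n → ℂ => toM ξ :=
      continuous_matrix fun i j => continuous_apply (i, j)
    exact this.matrix_det
  have hGopen : IsOpen {ξ : Fin n × Fin n → ℂ | (toM ξ).det ≠ 0} :=
    isOpen_compl_singleton.preimage hdetc
  have hSclosed : IsClosed S := by
    rw [hS]
    have : Continuous fun ξ : Fin n × Fin n → ℂ => ∑ x, Complex.normSq (ξ x) :=
      continuous_finset_sum _ fun x _ => Complex.continuous_normSq.comp (continuous_apply x)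
    exact isClosed_eq this continuous_const
  refine ⟨⟨{ξ : Fin n × Fin n → ℂ | (toM ξ).det ≠ 0}, hGopen, by rw [hMCeq]⟩, ?_, ?_⟩
  · -- density
    intro ξ hξS
    rcases Nat.eq_zero_or_pos n with rfl | hn
    · exfalso
      rw [hS] at hξS
      simp only [Set.mem_setOf_eq] at hξS
      rw [Finset.sum_of_isEmpty] at hξS
      exact zero_ne_one hξS
    · have hmem : ξ ∈ {η : Fin n × Fin n → ℂ |
          (toM η).det ≠ 0 ∧ ∑ x, Complex.normSq (η x) = 1} → True := fun _ => trivial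
      have hcl := dense_lemma hn ξ (by rw [hS] at hξS; exact hξS)
      have hseteq : {η : Fin n × Fin n → ℂ |
          (toM η).det ≠ 0 ∧ ∑ x, Complex.normSq (η x) = 1} = MC ∩ S := by
        ext η
        rw [hMCeq, hS]
        exact ⟨fun ⟨h1, h2⟩ => ⟨h1, h2⟩, fun ⟨h1, h2⟩ => ⟨h1, h2⟩⟩
      rw [hseteq] at hcl
      exact hcl
  · -- measure zero
    intro μ hPμ hμS hinv
    haveI := hPμ
    rcases Nat.eq_zero_or_pos n with rfl | hn
    · have : S \ MC = ∅ := by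
        ext ξ
        simp only [Set.mem_diff, Set.mem_empty_iff_false, iff_false, not_and, not_not]
        intro _
        rw [hMCeq]
        simp only [Set.mem_setOf_eq, Matrix.det_isEmpty]
        exact one_ne_zero
      rw [this, measure_empty]
    · have hNm : MeasurableSet (S \ MC) :=
        hSclosed.measurableSet.diff (hMCeq ▸ hGopen.measurableSet)
      refine main_null hn μ hinv hNm ?_ ?_
      · intro ξ hξ
        have := hξ.1
        rw [hS] at this
        exact this
      · intro ξ hξ
        have := hξ.2
        rw [hMCeq] at this
        simpa using this
end

section
/- Let H, K be finite-dimensional Hilbert spaces with 1 ≤ r ≤ dim H ≤ dim K. Then there exists an r-tuple (v_1, …, v_r) of operators in B(H,K) satisfying v_1*v_1 + ⋯ + v_r*v_r = 1_H such that {v_i* v_j : 1 ≤ i, j ≤ r} is a linearly independent subset of B(H). -/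
open ContinuousLinearMap

set_option maxHeartbeats 1000000

open Matrix ComplexOrder in
theorem stmt7_matrix' (r n : ℕ) (hr : 1 ≤ r) (hrn : r ≤ n) :
    ∃ u : Fin r → Matrix (Fin n) (Fin n) ℂ,
      (∑ i, (u i)ᴴ * u i) = 1 ∧
      ∀ g : Fin r × Fin r → ℂ,
        (∑ p : Fin r × Fin r, g p • ((u p.1)ᴴ * u p.2)) = 0 → ∀ p, g p = 0 := by
  classical
  set d : Fin r → Fin n → ℂ := fun i k => ((((k : ℕ) + 1) ^ (i : ℕ) : ℕ) : ℂ) with hd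
  set D : Fin r → Matrix (Fin n) (Fin n) ℂ := fun i => diagonal (d i) with hDdef
  have hD0 : D ⟨0, hr⟩ = 1 := by
    simp [hDdef, hd]
  have hDH : ∀ i, (D i)ᴴ = D i := by
    intro i
    have hsd : star (d i) = d i := by
      funext k
      simp only [hd, Pi.star_apply, star_natCast]
    simp [hDdef, diagonal_conjTranspose, hsd]
  set J : Matrix (Fin n) (Fin n) ℂ := of (fun _ _ => 1) with hJdef
  have hJpsd : J.PosSemidef := by
    have : J = (of (fun _ _ => 1) : Matrix (Fin 1) (Fin n) ℂ)ᴴ *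
        (of (fun _ _ => 1) : Matrix (Fin 1) (Fin n) ℂ) := by
      ext k l
      simp [hJdef, Matrix.mul_apply]
    rw [this]
    exact posSemidef_conjTranspose_mul_self _
  set G : Matrix (Fin n) (Fin n) ℂ := 1 + J with hGdef
  have hG : G.PosDef := Matrix.PosDef.one.add_posSemidef hJpsd
  have hGentry : ∀ k l, G k l ≠ 0 := by
    intro k l
    by_cases h : k = l <;> simp [hGdef, hJdef, Matrix.one_apply, h]
  set P : Matrix (Fin n) (Fin n) ℂ := ∑ i, D i * G * D i with hPdef
  have hP : P.PosDef := by
    have herase : P = D ⟨0, hr⟩ * G * D ⟨0, hr⟩ +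
        ∑ i ∈ Finset.univ.erase ⟨0, hr⟩, D i * G * D i := by
      rw [hPdef, ← Finset.add_sum_erase _ _ (Finset.mem_univ ⟨0, hr⟩)]
    have hpsd : (∑ i ∈ Finset.univ.erase (⟨0, hr⟩ : Fin r), D i * G * D i).PosSemidef := by
      refine Finset.sum_induction (fun i => D i * G * D i) Matrix.PosSemidef
        (fun a b ha hb => ha.add hb) Matrix.PosSemidef.zero (fun i _ => ?_)
      have h := hG.posSemidef.conjTranspose_mul_mul_same (D i)
      rwa [hDH] at h
    rw [herase, hD0]
    simpa using hG.add_posSemidef hpsd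
  obtain ⟨C, hC⟩ : ∃ C : Matrix (Fin n) (Fin n) ℂ, P = Cᴴ * C := by
    open scoped MatrixOrder Matrix.Norms.L2Operator in
    exact CStarAlgebra.nonneg_iff_eq_star_mul_self.mp hP.posSemidef.nonneg
  have hdetP : IsUnit P.det := hP.det_pos.ne'.isUnit
  have hdetC : IsUnit C.det := by
    rw [hC, Matrix.det_mul, Matrix.det_conjTranspose] at hdetP
    exact (IsUnit.mul_iff.mp hdetP).2
  have hdetCH : IsUnit Cᴴ.det := by rw [Matrix.det_conjTranspose]; exact hdetC.star
  obtain ⟨A, hA⟩ : ∃ A : Matrix (Fin n) (Fin n) ℂ, G = Aᴴ * A := by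
    open scoped MatrixOrder Matrix.Norms.L2Operator in
    exact CStarAlgebra.nonneg_iff_eq_star_mul_self.mp hG.posSemidef.nonneg
  have key : ∀ i j : Fin r, (A * D i * C⁻¹)ᴴ * (A * D j * C⁻¹) =
      C⁻¹ᴴ * (D i * G * D j) * C⁻¹ := by
    intro i j
    simp only [Matrix.conjTranspose_mul, hDH, hA, Matrix.mul_assoc]
  refine ⟨fun i => A * D i * C⁻¹, ?_, ?_⟩
  · have hsum : ∑ i, (A * D i * C⁻¹)ᴴ * (A * D i * C⁻¹) = C⁻¹ᴴ * P * C⁻¹ := by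
      simp only [key]
      rw [hPdef, Matrix.mul_sum, Matrix.sum_mul]
    rw [hsum, hC, Matrix.conjTranspose_nonsing_inv]
    rw [← Matrix.mul_assoc (Cᴴ)⁻¹ (Cᴴ) C, Matrix.nonsing_inv_mul _ hdetCH,
      Matrix.one_mul, Matrix.mul_nonsing_inv _ hdetC]
  · intro g hg p
    have h2 : (∑ p : Fin r × Fin r, g p • ((A * D p.1 * C⁻¹)ᴴ * (A * D p.2 * C⁻¹))) =
        C⁻¹ᴴ * (∑ p : Fin r × Fin r, g p • (D p.1 * G * D p.2)) * C⁻¹ := by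
      rw [Matrix.mul_sum, Matrix.sum_mul]
      exact Finset.sum_congr rfl fun p _ => by
        rw [key, mul_smul_comm, smul_mul_assoc]
    rw [h2] at hg
    have hT : (∑ p : Fin r × Fin r, g p • (D p.1 * G * D p.2)) = 0 := by
      have h4 := congrArg (fun M => Cᴴ * M * C) hg
      simp only [Matrix.mul_zero, Matrix.zero_mul] at h4
      rw [Matrix.conjTranspose_nonsing_inv, ← Matrix.mul_assoc (Cᴴ),
        Matrix.mul_nonsing_inv_cancel_left _ _ hdetCH, Matrix.mul_assoc,
        Matrix.nonsing_inv_mul _ hdetC, Matrix.mul_one] at h4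
      exact h4
    have h6 : ∀ k l : Fin n, (∑ p : Fin r × Fin r, g p * (d p.1 k * d p.2 l)) = 0 := by
      intro k l
      have h7 := congrArg (fun M : Matrix (Fin n) (Fin n) ℂ => M k l) hT
      simp only [Matrix.sum_apply, Matrix.smul_apply, Matrix.zero_apply, smul_eq_mul] at h7
      have hentry : ∀ i j : Fin r, (D i * G * D j) k l = d i k * d j l * G k l := by
        intro i j
        simp only [hDdef, Matrix.diagonal_mul, Matrix.mul_diagonal]
        ring
      have h8 : (∑ p : Fin r × Fin r, g p * (d p.1 k * d p.2 l)) * G k l = 0 := by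
        rw [Finset.sum_mul, ← h7]
        exact Finset.sum_congr rfl fun q _ => by rw [hentry]; ring
      exact (mul_eq_zero.mp h8).resolve_right (hGentry k l)
    set W : Matrix (Fin r) (Fin r) ℂ :=
      Matrix.vandermonde (fun i : Fin r => ((i : ℕ) + 1 : ℂ)) with hW
    have hd' : ∀ (i : Fin r) (k' : Fin r), d i (Fin.castLE hrn k') = W k' i := by
      intro i k'
      simp only [hd, hW, Matrix.vandermonde_apply, Fin.coe_castLE]
      push_cast
      ring
    have hdetW : IsUnit W.det := by
      rw [isUnit_iff_ne_zero, hW, Matrix.det_vandermonde]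
      refine Finset.prod_ne_zero_iff.mpr fun i _ => Finset.prod_ne_zero_iff.mpr fun j hj => ?_
      have hij' : i < j := Finset.mem_Ioi.mp hj
      have hij : (i : ℕ) < (j : ℕ) := hij'
      have hne : ((j : ℕ) : ℂ) ≠ ((i : ℕ) : ℂ) := by
        exact_mod_cast Nat.ne_of_gt hij
      have hrw : ((j : ℕ) : ℂ) + 1 - (((i : ℕ) : ℂ) + 1) = ((j : ℕ) : ℂ) - ((i : ℕ) : ℂ) := by
        ring
      rw [hrw, sub_ne_zero]
      exact hne
    have hdetWT : IsUnit Wᵀ.det := by rw [Matrix.det_transpose]; exact hdetW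
    have hMC : W * (Matrix.of fun i j => g (i, j)) * Wᵀ = 0 := by
      ext k l
      have h9 := h6 (Fin.castLE hrn k) (Fin.castLE hrn l)
      rw [Fintype.sum_prod_type] at h9
      simp only [Matrix.mul_apply, Matrix.transpose_apply, Matrix.zero_apply, Matrix.of_apply]
      calc ∑ j, (∑ i, W k i * g (i, j)) * W l j
          = ∑ j, ∑ i, W k i * g (i, j) * W l j := by simp only [Finset.sum_mul]
        _ = ∑ i, ∑ j, W k i * g (i, j) * W l j := by rw [Finset.sum_comm]
        _ = ∑ i, ∑ j, g (i, j) * (d i (Fin.castLE hrn k) * d j (Fin.castLE hrn l)) :=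
            Finset.sum_congr rfl fun i _ => Finset.sum_congr rfl fun j _ => by
              rw [hd', hd']; ring
        _ = 0 := h9
    have hg0 : (Matrix.of fun i j => g (i, j)) = 0 := by
      have h10 := congrArg (fun M => W⁻¹ * M * Wᵀ⁻¹) hMC
      simp only [Matrix.mul_zero, Matrix.zero_mul] at h10
      rw [← Matrix.mul_assoc W⁻¹, Matrix.nonsing_inv_mul_cancel_left _ _ hdetW,
        Matrix.mul_nonsing_inv_cancel_right _ _ hdetWT] at h10
      exact h10
    have := congrArg (fun M : Matrix (Fin r) (Fin r) ℂ => M p.1 p.2) hg0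
    simpa using this

open Matrix in
/-- If `1 ≤ r ≤ dim H ≤ dim K`, there is an r-tuple
`(v₁, …, v_r)` in B(H,K) with `Σ vᵢ*vᵢ = 1` such that the operators
`vᵢ*vⱼ` are linearly independent in B(H). -/
theorem stmt7 {H K : Type*}
    [NormedAddCommGroup H] [InnerProductSpace ℂ H] [FiniteDimensional ℂ H]
    [NormedAddCommGroup K] [InnerProductSpace ℂ K] [FiniteDimensional ℂ K]
    (r : ℕ) (hr : 1 ≤ r) (hrn : r ≤ Module.finrank ℂ H)
    (hnm : Module.finrank ℂ H ≤ Module.finrank ℂ K) :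
    ∃ v : Fin r → H →L[ℂ] K,
      (∑ i, (ContinuousLinearMap.adjoint (v i)) ∘L (v i)) = 1 ∧
      LinearIndependent ℂ fun p : Fin r × Fin r =>
        (ContinuousLinearMap.adjoint (v p.1)) ∘L (v p.2) := by
  classical
  set n := Module.finrank ℂ H with hn
  obtain ⟨u, hu1, hu2⟩ := stmt7_matrix' r n hr hrn
  set E := EuclideanSpace ℂ (Fin n) with hE
  set T : Matrix (Fin n) (Fin n) ℂ → (E →L[ℂ] E) :=
    fun M => Matrix.toEuclideanCLM (𝕜 := ℂ) M with hT
  have hTsum : ∀ (c : Fin r × Fin r → ℂ) (M : Fin r × Fin r → Matrix (Fin n) (Fin n) ℂ),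
      T (∑ p, c p • M p) = ∑ p, c p • T (M p) := by
    intro c M
    rw [hT]
    simp only [map_sum, _root_.map_smul]
  have hTsum' : ∀ (M : Fin r → Matrix (Fin n) (Fin n) ℂ),
      T (∑ i, M i) = ∑ i, T (M i) := by
    intro M
    rw [hT]
    simp only [map_sum]
  have hTone : T 1 = 1 := by rw [hT]; exact map_one _
  have hTinj : Function.Injective T := by
    rw [hT]; exact (Matrix.toEuclideanCLM (𝕜 := ℂ) (n := Fin n)).injective
  have hTapp : ∀ (M N : Matrix (Fin n) (Fin n) ℂ) (y : E), T (M * N) y = T M (T N y) := by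
    intro M N y
    rw [hT]
    simp only [_root_.map_mul]
    rfl
  have hTadj : ∀ M : Matrix (Fin n) (Fin n) ℂ, adjoint (T M) = T Mᴴ := by
    intro M
    rw [hT, ← ContinuousLinearMap.star_eq_adjoint, ← map_star, Matrix.star_eq_conjTranspose]
  set e : H ≃ₗᵢ[ℂ] E := (stdOrthonormalBasis ℂ H).repr with he
  -- an isometric embedding of E into K
  set w : Fin n → K := fun i => stdOrthonormalBasis ℂ K (Fin.castLE hnm i) with hwdef
  have hw : Orthonormal ℂ w :=
    (stdOrthonormalBasis ℂ K).orthonormal.comp _ (Fin.castLE_injective hnm)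
  set bE := EuclideanSpace.basisFun (Fin n) ℂ with hbEdef
  set f : E →ₗ[ℂ] K := bE.toBasis.constr ℂ w with hf
  have hbE : Orthonormal ℂ bE.toBasis := by
    rw [OrthonormalBasis.coe_toBasis]; exact bE.orthonormal
  have hfw : Orthonormal ℂ (f ∘ bE.toBasis) := by
    have hfb : (⇑f ∘ ⇑bE.toBasis) = w := by
      funext i
      simp only [Function.comp_apply, hf, Module.Basis.constr_basis]
    rw [hfb]; exact hw
  set Jiso : E →ₗᵢ[ℂ] K := f.isometryOfOrthonormal hbE hfw with hJiso
  set Jc : E →L[ℂ] K := Jiso.toContinuousLinearMap with hJc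
  have hJ : adjoint Jc ∘L Jc = 1 :=
    (norm_map_iff_adjoint_comp_self Jc).mp fun x => Jiso.norm_map x
  have hJ' : ∀ y : E, adjoint Jc (Jc y) = y := by
    intro y
    have h := ContinuousLinearMap.ext_iff.mp hJ y
    simpa using h
  set ec : H →L[ℂ] E := (e : H →L[ℂ] E) with hec
  have hecx : ∀ x : H, ec x = e x := fun _ => rfl
  have hecadj : adjoint ec = (e.symm : E →L[ℂ] H) := e.adjoint_eq_symm
  have hecadjx : ∀ z : E, adjoint ec z = e.symm z := by
    intro z; rw [hecadj]; rfl
  have hterm : ∀ (i j : Fin r) (x : H),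
      (adjoint ((Jc ∘L T (u i)) ∘L ec) ∘L ((Jc ∘L T (u j)) ∘L ec)) x
        = e.symm (T ((u i)ᴴ * u j) (e x)) := by
    intro i j x
    simp only [adjoint_comp, ContinuousLinearMap.comp_apply]
    rw [hecx, hJ', hTadj, hecadjx, ← hTapp]
  refine ⟨fun i => (Jc ∘L T (u i)) ∘L ec, ?_, ?_⟩
  · ext x
    rw [ContinuousLinearMap.sum_apply]
    calc ∑ i, (adjoint ((Jc ∘L T (u i)) ∘L ec) ∘L ((Jc ∘L T (u i)) ∘L ec)) x
        = ∑ i, e.symm (T ((u i)ᴴ * u i) (e x)) :=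
          Finset.sum_congr rfl fun i _ => hterm i i x
      _ = e.symm ((∑ i, T ((u i)ᴴ * u i)) (e x)) := by
          rw [ContinuousLinearMap.sum_apply, map_sum]
      _ = e.symm ((T (∑ i, (u i)ᴴ * u i)) (e x)) := by rw [hTsum']
      _ = x := by rw [hu1, hTone]; simp
      _ = (1 : H →L[ℂ] H) x := by simp
  · rw [Fintype.linearIndependent_iff]
    intro g hg
    refine hu2 g ?_
    have hx : ∀ y : E, (∑ p : Fin r × Fin r, g p • T ((u p.1)ᴴ * u p.2)) y = 0 := by
      intro y
      have h1 := congrArg (fun S : H →L[ℂ] H => S (e.symm y)) hg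
      simp only [ContinuousLinearMap.sum_apply, ContinuousLinearMap.smul_apply,
        ContinuousLinearMap.zero_apply] at h1
      simp only [hterm, LinearIsometryEquiv.apply_symm_apply] at h1
      have h2 := congrArg e h1
      simp only [map_sum, _root_.map_smul, LinearIsometryEquiv.apply_symm_apply,
        map_zero] at h2
      simpa [ContinuousLinearMap.sum_apply, ContinuousLinearMap.smul_apply] using h2
    apply hTinj
    rw [hTsum]
    have h0 : T 0 = 0 := by rw [hT]; exact map_zero _
    rw [h0]
    refine ContinuousLinearMap.ext fun y => ?_
    simpa [ContinuousLinearMap.sum_apply, ContinuousLinearMap.smul_apply] using hx y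
end

section
/- Let H_1, H_2 be finite-dimensional Hilbert spaces and let (v_1, …, v_r) and (v_1', …, v_r') be r-tuples of operators in B(H_2, H_1). If Σ_i v_i* x v_i = Σ_i v_i'* x v_i' for all x ∈ B(H_1), then there exists a unitary r × r matrix (λ_{ij}) with v_i' = Σ_j λ_{ij} v_j for all i; and conversely. -/
open ContinuousLinearMap Module

open scoped InnerProductSpace

/-- Two families with equal Gram matrices are related by a linear isometry equivalence. -/
lemma gram_unitary {r : ℕ} {ι : Type*} (f g : ι → EuclideanSpace ℂ (Fin r))
    (h : ∀ p q, ⟪f p, f q⟫_ℂ = ⟪g p, g q⟫_ℂ) :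
    ∃ U : EuclideanSpace ℂ (Fin r) ≃ₗᵢ[ℂ] EuclideanSpace ℂ (Fin r),
      ∀ p, U (f p) = g p := by
  classical
  set F : (ι →₀ ℂ) →ₗ[ℂ] EuclideanSpace ℂ (Fin r) := Finsupp.linearCombination ℂ f with hF
  set G : (ι →₀ ℂ) →ₗ[ℂ] EuclideanSpace ℂ (Fin r) := Finsupp.linearCombination ℂ g with hG
  have key : ∀ l l' : ι →₀ ℂ, ⟪F l, F l'⟫_ℂ = ⟪G l, G l'⟫_ℂ := by
    intro l l'
    simp only [hF, hG, Finsupp.linearCombination_apply, Finsupp.sum, sum_inner, inner_sum,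
      inner_smul_left, inner_smul_right, h]
  have hker : LinearMap.ker F ≤ LinearMap.ker G := by
    intro l hl
    rw [LinearMap.mem_ker] at hl ⊢
    rw [← inner_self_eq_zero (𝕜 := ℂ), ← key, hl, inner_zero_left]
  set Gbar : ((ι →₀ ℂ) ⧸ LinearMap.ker F) →ₗ[ℂ] EuclideanSpace ℂ (Fin r) :=
    (LinearMap.ker F).liftQ G hker with hGbar
  set S : Submodule ℂ (EuclideanSpace ℂ (Fin r)) := LinearMap.range F with hS
  set h0 : S →ₗ[ℂ] EuclideanSpace ℂ (Fin r) :=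
    Gbar ∘ₗ F.quotKerEquivRange.symm.toLinearMap with hh0
  have h0_apply : ∀ l : ι →₀ ℂ, h0 ⟨F l, LinearMap.mem_range_self F l⟩ = G l := by
    intro l
    simp only [hh0, LinearMap.comp_apply, LinearEquiv.coe_coe]
    rw [LinearMap.quotKerEquivRange_symm_apply_image]
    simp [hGbar]
  have hnorm : ∀ s : S, ‖h0 s‖ = ‖(s : EuclideanSpace ℂ (Fin r))‖ := by
    rintro ⟨s, hs⟩
    obtain ⟨l, rfl⟩ := hs
    rw [h0_apply l]
    rw [@norm_eq_sqrt_re_inner ℂ, @norm_eq_sqrt_re_inner ℂ, key]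
  set L : S →ₗᵢ[ℂ] EuclideanSpace ℂ (Fin r) := ⟨h0, hnorm⟩ with hL
  refine ⟨L.extend.toLinearIsometryEquiv rfl, fun p => ?_⟩
  have hfp : f p = F (Finsupp.single p 1) := by
    simp [hF]
  have hmem : f p ∈ S := hfp ▸ LinearMap.mem_range_self F _
  have hext : L.extend (f p) = L ⟨f p, hmem⟩ := L.extend_apply ⟨f p, hmem⟩
  rw [LinearIsometry.toLinearIsometryEquiv_apply, hext]
  have heq : (⟨f p, hmem⟩ : S) = ⟨F (Finsupp.single p 1), LinearMap.mem_range_self F _⟩ := by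
    simp [hfp]
  rw [hL, heq]
  show h0 _ = g p
  rw [h0_apply]
  simp [hG]

lemma unitary_sum_conj_mul {r : ℕ} (lam : Matrix (Fin r) (Fin r) ℂ)
    (hl : lam ∈ Matrix.unitaryGroup (Fin r) ℂ) (j k : Fin r) :
    ∑ i, (starRingEnd ℂ) (lam i j) * lam i k = if j = k then 1 else 0 := by
  have h1 : star lam * lam = 1 := (Matrix.mem_unitaryGroup_iff').mp hl
  have := congrFun (congrFun h1 j) k
  rw [Matrix.mul_apply] at this
  simp only [Matrix.star_apply, Matrix.one_apply] at this
  simpa using this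


/-- Two r-tuples of operators in B(H₂,H₁) implement the same
completely positive map `x ↦ Σ vᵢ* x vᵢ` iff they are related by a unitary
r×r matrix of scalars. (No linear independence is assumed.) -/
theorem stmt9 {H₁ H₂ : Type*}
    [NormedAddCommGroup H₁] [InnerProductSpace ℂ H₁] [FiniteDimensional ℂ H₁]
    [NormedAddCommGroup H₂] [InnerProductSpace ℂ H₂] [FiniteDimensional ℂ H₂]
    (r : ℕ) (v v' : Fin r → H₂ →L[ℂ] H₁) :
    (∀ x : H₁ →L[ℂ] H₁,
        ∑ i, (ContinuousLinearMap.adjoint (v i)) ∘L (x ∘L v i)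
          = ∑ i, (ContinuousLinearMap.adjoint (v' i)) ∘L (x ∘L v' i))
      ↔ ∃ lam : Matrix.unitaryGroup (Fin r) ℂ,
          ∀ i, v' i = ∑ j, (lam : Matrix (Fin r) (Fin r) ℂ) i j • v j := by
  have sum_apply : ∀ (f : Fin r → EuclideanSpace ℂ (Fin r)) (i : Fin r),
      (∑ j, f j) i = ∑ j, f j i := fun f i => by
        rw [WithLp.ofLp_sum]; exact Finset.sum_apply i Finset.univ _
  have expand : ∀ (w : Fin r → H₂ →L[ℂ] H₁) (a b : H₁) (ξ η : H₂),
      ⟪ξ, (∑ i, (ContinuousLinearMap.adjoint (w i)) ∘L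
          (((innerSL ℂ b).smulRight a) ∘L w i)) η⟫_ℂ
        = ∑ i, ⟪w i ξ, a⟫_ℂ * ⟪b, w i η⟫_ℂ := by
    intro w a b ξ η
    simp only [ContinuousLinearMap.sum_apply, inner_sum, ContinuousLinearMap.comp_apply,
      ContinuousLinearMap.adjoint_inner_right, ContinuousLinearMap.smulRight_apply,
      innerSL_apply_apply, inner_smul_right]
    exact Finset.sum_congr rfl fun i _ => mul_comm _ _
  constructor
  · intro h
    have key : ∀ (ξ η : H₂) (a b : H₁),
        ∑ i, ⟪v i ξ, a⟫_ℂ * ⟪b, v i η⟫_ℂ = ∑ i, ⟪v' i ξ, a⟫_ℂ * ⟪b, v' i η⟫_ℂ := by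
      intro ξ η a b
      rw [← expand v a b ξ η, ← expand v' a b ξ η, h ((innerSL ℂ b).smulRight a)]
    set c : H₂ × H₁ → EuclideanSpace ℂ (Fin r) :=
      fun p => WithLp.toLp 2 (fun i => ⟪p.2, v i p.1⟫_ℂ) with hc
    set c' : H₂ × H₁ → EuclideanSpace ℂ (Fin r) :=
      fun p => WithLp.toLp 2 (fun i => ⟪p.2, v' i p.1⟫_ℂ) with hc'
    have gram : ∀ p q : H₂ × H₁, ⟪c p, c q⟫_ℂ = ⟪c' p, c' q⟫_ℂ := by
      intro p q
      simp only [hc, hc', PiLp.inner_apply, RCLike.inner_apply]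
      have := key p.1 q.1 p.2 q.2
      simpa [inner_conj_symm, mul_comm] using this
    obtain ⟨U, hU⟩ := gram_unitary c c' gram
    set lamM : Matrix (Fin r) (Fin r) ℂ :=
      fun i j => U (EuclideanSpace.single j 1) i with hlam
    have hdecomp : ∀ x : EuclideanSpace ℂ (Fin r),
        x = ∑ j, x j • EuclideanSpace.single j (1 : ℂ) := by
      intro x
      ext i
      rw [sum_apply]
      simp [EuclideanSpace.single_apply, Finset.sum_ite_eq', mul_comm]
    have hUapp : ∀ (x : EuclideanSpace ℂ (Fin r)) (i : Fin r),
        U x i = ∑ j, lamM i j * x j := by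
      intro x i
      conv_lhs => rw [hdecomp x]
      rw [map_sum, sum_apply]
      exact Finset.sum_congr rfl fun j _ => by
        rw [map_smul]
        show x j * U (EuclideanSpace.single j 1) i = _
        rw [hlam, mul_comm]
    have hinner : ∀ j k : Fin r,
        ∑ i, (starRingEnd ℂ) (lamM i j) * lamM i k = if j = k then 1 else 0 := by
      intro j k
      calc ∑ i, (starRingEnd ℂ) (lamM i j) * lamM i k
          = ⟪U (EuclideanSpace.single j (1:ℂ)), U (EuclideanSpace.single k (1:ℂ))⟫_ℂ := by
            simp only [PiLp.inner_apply, RCLike.inner_apply, hlam]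
            exact Finset.sum_congr rfl fun _ _ => mul_comm _ _
        _ = ⟪EuclideanSpace.single j (1:ℂ), EuclideanSpace.single k (1:ℂ)⟫_ℂ :=
            U.inner_map_map _ _
        _ = if j = k then 1 else 0 := by
            rw [EuclideanSpace.inner_single_left]
            by_cases hjk : j = k
            · simp [EuclideanSpace.single_apply, hjk]
            · simp [EuclideanSpace.single_apply, hjk, Ne.symm hjk]
    have hmem : lamM ∈ Matrix.unitaryGroup (Fin r) ℂ := by
      rw [Matrix.mem_unitaryGroup_iff']
      ext j k
      rw [Matrix.mul_apply]
      simp only [Matrix.star_apply, RCLike.star_def, Matrix.one_apply]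
      rw [hinner j k]
    refine ⟨⟨lamM, hmem⟩, fun i => ?_⟩
    ext η
    apply ext_inner_left ℂ
    intro b
    have h1 : ⟪b, v' i η⟫_ℂ = c' (η, b) i := rfl
    rw [h1, ← hU (η, b), hUapp]
    have h2 : ((∑ j, lamM i j • v j) : H₂ →L[ℂ] H₁) η = ∑ j, lamM i j • (v j η) := by
      simp
    rw [h2, inner_sum]
    exact Finset.sum_congr rfl fun j _ => by rw [inner_smul_right]
  · rintro ⟨⟨lam, hmem⟩, hrel⟩
    intro x
    ext η
    apply ext_inner_left ℂ
    intro ξ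
    simp only [ContinuousLinearMap.sum_apply, inner_sum, ContinuousLinearMap.comp_apply,
      ContinuousLinearMap.adjoint_inner_right]
    have hside : ∀ i, ⟪v' i ξ, x (v' i η)⟫_ℂ
        = ∑ j, ∑ k, (starRingEnd ℂ) (lam i j) * lam i k * ⟪v j ξ, x (v k η)⟫_ℂ := by
      intro i
      rw [hrel i]
      have hξ : ((∑ j, lam i j • v j) : H₂ →L[ℂ] H₁) ξ = ∑ j, lam i j • (v j ξ) := by simp
      have hη : ((∑ j, lam i j • v j) : H₂ →L[ℂ] H₁) η = ∑ j, lam i j • (v j η) := by simp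
      rw [hξ, hη, map_sum, sum_inner]
      refine Finset.sum_congr rfl fun j _ => ?_
      rw [inner_smul_left, inner_sum, Finset.mul_sum]
      refine Finset.sum_congr rfl fun k _ => ?_
      rw [map_smul, inner_smul_right]
      try ring
    rw [Finset.sum_congr rfl fun i _ => hside i, Finset.sum_comm]
    have hcol : ∀ j, ∑ i, ∑ k, (starRingEnd ℂ) (lam i j) * lam i k * ⟪v j ξ, x (v k η)⟫_ℂ
        = ∑ k, (∑ i, (starRingEnd ℂ) (lam i j) * lam i k) * ⟪v j ξ, x (v k η)⟫_ℂ := by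
      intro j
      rw [Finset.sum_comm]
      exact Finset.sum_congr rfl fun k _ => by rw [Finset.sum_mul]
    rw [Finset.sum_congr rfl fun j _ => hcol j]
    simp [unitary_sum_conj_mul lam hmem]
end

section
/- Let φ: B(K) → B(H) be a UCP map given by φ(x) = Σ_{i=1}^r v_i* x v_i, and suppose each v_i ∈ B(H,K) has rank at most 1. Then for every unit vector ξ ∈ H ⊗ H, the state ρ_ξ(a ⊗ b) = ⟨(φ(a) ⊗ b)ξ, ξ⟩ of B(K ⊗ H) is separable. -/
open Matrix Kronecker ComplexOrder

/-- A state of a matrix algebra: a positive unital linear functional. -/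
def IsState (d : ℕ) (ω : Matrix (Fin d) (Fin d) ℂ →ₗ[ℂ] ℂ) : Prop :=
  (∀ a : Matrix (Fin d) (Fin d) ℂ, 0 ≤ ω (aᴴ * a)) ∧ ω 1 = 1

/-- Rank-one decomposition of a matrix of rank at most one. -/
lemma stmt19_rank1 {m n : ℕ} (M : Matrix (Fin m) (Fin n) ℂ) (h : M.rank ≤ 1) :
    ∃ (u : Fin m → ℂ) (w : Fin n → ℂ), ∀ x y, M x y = u x * w y := by
  have h' : Module.finrank ℂ (LinearMap.range M.mulVecLin) ≤ 1 := h
  rw [Submodule.finrank_le_one_iff_isPrincipal] at h'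
  obtain ⟨u, hu⟩ := h'
  have key : ∀ y : Fin n, ∃ c : ℂ, c • u = M.mulVec (Pi.single y 1) := by
    intro y
    have : M.mulVec (Pi.single y 1) ∈ LinearMap.range M.mulVecLin := ⟨_, rfl⟩
    rwa [hu, Submodule.mem_span_singleton] at this
  choose w hw using key
  refine ⟨u, w, fun x y => ?_⟩
  have := congrFun (hw y) x
  simp only [Pi.smul_apply, smul_eq_mul, mulVec_single_one, Matrix.col_apply, mul_one] at this
  rw [← this, mul_comm]

/-- The (unnormalized) vector functional `a ↦ ⟨a η, η⟩`. -/
noncomputable def stmt19_vecState (d : ℕ) (η : Fin d → ℂ) :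
    Matrix (Fin d) (Fin d) ℂ →ₗ[ℂ] ℂ where
  toFun a := star η ⬝ᵥ a.mulVec η
  map_add' a b := by simp [Matrix.add_mulVec, dotProduct_add]
  map_smul' c a := by simp [Matrix.smul_mulVec, dotProduct_smul]

lemma stmt19_vecState_apply (d : ℕ) (η : Fin d → ℂ) (a : Matrix (Fin d) (Fin d) ℂ) :
    stmt19_vecState d η a = star η ⬝ᵥ a.mulVec η := rfl

lemma stmt19_vecState_pos (d : ℕ) (η : Fin d → ℂ) (a : Matrix (Fin d) (Fin d) ℂ) :
    0 ≤ stmt19_vecState d η (aᴴ * a) := by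
  have : stmt19_vecState d η (aᴴ * a) = star (a.mulVec η) ⬝ᵥ (a.mulVec η) := by
    rw [stmt19_vecState_apply, ← mulVec_mulVec, dotProduct_mulVec, ← star_mulVec]
  rw [this]
  exact dotProduct_star_self_nonneg _

lemma stmt19_vecState_one (d : ℕ) (η : Fin d → ℂ) :
    stmt19_vecState d η 1 = ((∑ x, Complex.normSq (η x) : ℝ) : ℂ) := by
  rw [stmt19_vecState_apply, one_mulVec]
  push_cast
  simp [dotProduct, Complex.normSq_eq_conj_mul_self]

lemma stmt19_std_isState (d : ℕ) (hd : 0 < d) :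
    IsState d (stmt19_vecState d (Pi.single ⟨0, hd⟩ 1)) := by
  refine ⟨fun a => stmt19_vecState_pos d _ a, ?_⟩
  rw [stmt19_vecState_one]
  norm_cast
  rw [Finset.sum_eq_single (⟨0, hd⟩ : Fin d)] <;>
    simp +contextual [Pi.single_apply]

lemma stmt19_kraus {m n : ℕ} (η : Fin m → ℂ) (ζ : Fin n → ℂ) (a : Matrix (Fin m) (Fin m) ℂ)
    (v : Matrix (Fin m) (Fin n) ℂ) (hv : ∀ x y, v x y = η x * ζ y) :
    vᴴ * a * v = (star η ⬝ᵥ a.mulVec η) • vecMulVec (star ζ) ζ := by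
  ext x y
  simp only [mul_apply, conjTranspose_apply, hv, Matrix.smul_apply, vecMulVec_apply, Pi.star_apply,
    smul_eq_mul, dotProduct, mulVec, Finset.sum_mul, Finset.mul_sum, star_mul']
  rw [Finset.sum_comm]
  refine Finset.sum_congr rfl fun p _ => Finset.sum_congr rfl fun q _ => ?_
  ring

lemma stmt19_lin {n r : ℕ} (b : Matrix (Fin n) (Fin n) ℂ) (ξ : Fin n × Fin n → ℂ)
    (c : Fin r → ℂ) (P : Fin r → Matrix (Fin n) (Fin n) ℂ) :
    star ξ ⬝ᵥ (((∑ i, c i • P i) ⊗ₖ b).mulVec ξ)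
      = ∑ i, c i * (star ξ ⬝ᵥ ((P i ⊗ₖ b).mulVec ξ)) := by
  let L : Matrix (Fin n) (Fin n) ℂ →ₗ[ℂ] ℂ :=
    { toFun := fun M => star ξ ⬝ᵥ ((M ⊗ₖ b).mulVec ξ)
      map_add' := fun x y => by
        simp [Matrix.add_kronecker, Matrix.add_mulVec, dotProduct_add]
      map_smul' := fun d x => by
        simp [Matrix.smul_kronecker, Matrix.smul_mulVec, dotProduct_smul] }
  have : L (∑ i, c i • P i) = ∑ i, c i * L (P i) := by
    rw [map_sum]
    exact Finset.sum_congr rfl fun i _ => by rw [LinearMap.map_smul, smul_eq_mul]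
  exact this

lemma stmt19_quad {n : ℕ} (ζ : Fin n → ℂ) (b : Matrix (Fin n) (Fin n) ℂ)
    (ξ : Fin n × Fin n → ℂ) :
    star ξ ⬝ᵥ ((vecMulVec (star ζ) ζ ⊗ₖ b).mulVec ξ)
      = star (fun y => ∑ x, ζ x * ξ (x, y)) ⬝ᵥ b.mulVec (fun y => ∑ x, ζ x * ξ (x, y)) := by
  simp only [dotProduct, mulVec, kroneckerMap_apply, vecMulVec_apply, Pi.star_apply,
    Fintype.sum_prod_type, star_sum, star_mul', Finset.sum_mul, Finset.mul_sum]
  rw [Finset.sum_comm]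
  refine Finset.sum_congr rfl fun y _ => ?_
  rw [Finset.sum_comm]
  refine Eq.trans (Finset.sum_congr rfl fun x' _ => Finset.sum_comm) ?_
  rw [Finset.sum_comm]
  refine Finset.sum_congr rfl fun y' _ => Finset.sum_congr rfl fun x' _ =>
    Finset.sum_congr rfl fun x _ => ?_
  ring

/-- If a UCP map `φ(x) = Σᵢ vᵢ* x vᵢ` has all Kraus operators of
rank at most 1, then for every unit vector ξ ∈ H ⊗ H, the state
`ρ_ξ(a ⊗ b) = ⟨(φ(a) ⊗ b)ξ, ξ⟩` of B(K ⊗ H) is separable. -/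
theorem stmt19 (m n r : ℕ)
    (v : Fin r → Matrix (Fin m) (Fin n) ℂ)
    (hrank : ∀ i, (v i).rank ≤ 1)
    (hsum : ∑ i, (v i)ᴴ * (v i) = 1)
    (φ : Matrix (Fin m) (Fin m) ℂ → Matrix (Fin n) (Fin n) ℂ)
    (hφ : ∀ x, φ x = ∑ i, (v i)ᴴ * x * (v i))
    (ξ : Fin n × Fin n → ℂ) (hξ : ∑ x, Complex.normSq (ξ x) = 1) :
    ∃ (N : ℕ) (t : Fin N → ℝ)
      (σ : Fin N → (Matrix (Fin m) (Fin m) ℂ →ₗ[ℂ] ℂ))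
      (τ : Fin N → (Matrix (Fin n) (Fin n) ℂ →ₗ[ℂ] ℂ)),
      (∀ k, 0 ≤ t k) ∧ (∑ k, t k = 1) ∧
      (∀ k, IsState m (σ k)) ∧ (∀ k, IsState n (τ k)) ∧
      ∀ (a : Matrix (Fin m) (Fin m) ℂ) (b : Matrix (Fin n) (Fin n) ℂ),
        star ξ ⬝ᵥ ((φ a ⊗ₖ b).mulVec ξ) = ∑ k, (t k : ℂ) * σ k a * τ k b := by
  classical
  -- rank-one decompositions
  choose η ζ hv using fun i => stmt19_rank1 (v i) (hrank i)
  -- positivity of dimensions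
  have hn : 0 < n := by
    rcases Nat.eq_zero_or_pos n with h | h
    · subst h; simp at hξ
    · exact h
  have hm : 0 < m := by
    rcases Nat.eq_zero_or_pos m with h | h
    · exfalso
      subst h
      have h0 : ∀ i : Fin r, (v i)ᴴ * (v i) = 0 := fun i => by
        ext x y; simp [mul_apply]
      rw [Finset.sum_congr rfl fun i _ => h0 i, Finset.sum_const, smul_zero] at hsum
      have := congrFun (congrFun hsum ⟨0, hn⟩) ⟨0, hn⟩
      simp at this
    · exact h
  -- reduced vectors and weights
  set u : Fin r → Fin n → ℂ := fun i y => ∑ x, ζ i x * ξ (x, y) with hu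
  set S : Fin r → ℝ := fun i => ∑ x, Complex.normSq (η i x) with hS
  set T : Fin r → ℝ := fun i => ∑ x, Complex.normSq (u i x) with hT
  have hSnn : ∀ i, 0 ≤ S i := fun i =>
    Finset.sum_nonneg fun x _ => Complex.normSq_nonneg _
  have hTnn : ∀ i, 0 ≤ T i :=
    fun i => Finset.sum_nonneg fun x _ => Complex.normSq_nonneg _
  have hSval : ∀ i, star (η i) ⬝ᵥ (1 : Matrix (Fin m) (Fin m) ℂ).mulVec (η i) = (S i : ℂ) :=
    fun i => stmt19_vecState_one m (η i)
  have hTval : ∀ i, star (u i) ⬝ᵥ (1 : Matrix (Fin n) (Fin n) ℂ).mulVec (u i) = (T i : ℂ) :=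
    fun i => stmt19_vecState_one n (u i)
  have hSzero : ∀ i, S i = 0 → η i = 0 := by
    intro i hi
    funext x
    have := (Finset.sum_eq_zero_iff_of_nonneg
      (fun x _ => Complex.normSq_nonneg (η i x))).1 hi x (Finset.mem_univ x)
    exact Complex.normSq_eq_zero.1 this
  have hTzero : ∀ i, T i = 0 → u i = 0 := by
    intro i hi
    funext x
    have := (Finset.sum_eq_zero_iff_of_nonneg
      (fun x _ => Complex.normSq_nonneg (u i x))).1 hi x (Finset.mem_univ x)
    exact Complex.normSq_eq_zero.1 this
  -- the key identity
  have key : ∀ (a : Matrix (Fin m) (Fin m) ℂ) (b : Matrix (Fin n) (Fin n) ℂ),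
      star ξ ⬝ᵥ ((φ a ⊗ₖ b).mulVec ξ)
        = ∑ i, (star (η i) ⬝ᵥ a.mulVec (η i)) * (star (u i) ⬝ᵥ b.mulVec (u i)) := by
    intro a b
    rw [hφ]
    have h1 : (∑ i, (v i)ᴴ * a * (v i))
        = ∑ i, (star (η i) ⬝ᵥ a.mulVec (η i)) • vecMulVec (star (ζ i)) (ζ i) :=
      Finset.sum_congr rfl fun i _ => stmt19_kraus (η i) (ζ i) a (v i) (hv i)
    rw [h1, stmt19_lin]
    exact Finset.sum_congr rfl fun i _ => by rw [stmt19_quad (ζ i) b ξ]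
  -- total mass is one
  have hmass : ∑ i, (S i : ℂ) * (T i : ℂ) = 1 := by
    have hφ1 : φ 1 = 1 := by
      rw [hφ, Finset.sum_congr rfl fun (i : Fin r) _ => by rw [Matrix.mul_one]]
      exact hsum
    have := key 1 1
    rw [hφ1, Matrix.one_kronecker_one, one_mulVec] at this
    have hip : star ξ ⬝ᵥ ξ = 1 := by
      have : star ξ ⬝ᵥ ξ = ((∑ x, Complex.normSq (ξ x) : ℝ) : ℂ) := by
        push_cast
        simp [dotProduct, Complex.normSq_eq_conj_mul_self]
      rw [this, hξ]; norm_num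
    rw [hip] at this
    refine Eq.trans (Finset.sum_congr rfl fun i _ => ?_) this.symm
    rw [hSval, hTval]
  -- assemble the separable decomposition
  refine ⟨r, fun k => S k * T k,
    fun k => if S k = 0 then stmt19_vecState m (Pi.single ⟨0, hm⟩ 1)
      else ((S k : ℂ))⁻¹ • stmt19_vecState m (η k),
    fun k => if T k = 0 then stmt19_vecState n (Pi.single ⟨0, hn⟩ 1)
      else ((T k : ℂ))⁻¹ • stmt19_vecState n (u k),
    fun k => mul_nonneg (hSnn k) (hTnn k), ?_, ?_, ?_, ?_⟩
  · -- sum of weights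
    have : ((∑ k, S k * T k : ℝ) : ℂ) = ((1 : ℝ) : ℂ) := by
      push_cast
      rw [← hmass]
    exact_mod_cast this
  · -- σ are states
    intro k
    by_cases h : S k = 0
    · simpa [h] using stmt19_std_isState m hm
    · simp only [h, if_false]
      constructor
      · intro a
        simp only [LinearMap.smul_apply, smul_eq_mul]
        refine mul_nonneg ?_ (stmt19_vecState_pos m (η k) a)
        rw [← Complex.ofReal_inv]
        exact Complex.zero_le_real.2 (inv_nonneg.2 (hSnn k))
      · simp only [LinearMap.smul_apply, smul_eq_mul, stmt19_vecState_one]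
        rw [inv_mul_cancel₀]
        exact_mod_cast h
  · -- τ are states
    intro k
    by_cases h : T k = 0
    · simpa [h] using stmt19_std_isState n hn
    · simp only [h, if_false]
      constructor
      · intro a
        simp only [LinearMap.smul_apply, smul_eq_mul]
        refine mul_nonneg ?_ (stmt19_vecState_pos n (u k) a)
        rw [← Complex.ofReal_inv]
        exact Complex.zero_le_real.2 (inv_nonneg.2 (hTnn k))
      · simp only [LinearMap.smul_apply, smul_eq_mul, stmt19_vecState_one]
        rw [inv_mul_cancel₀]
        exact_mod_cast h
  · -- the separability identity
    intro a b
    rw [key a b]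
    refine Finset.sum_congr rfl fun i _ => ?_
    by_cases hSk : S i = 0
    · have hη : η i = 0 := hSzero i hSk
      simp [hSk, hη, stmt19_vecState_apply]
    · by_cases hTk : T i = 0
      · have hu0 : u i = 0 := hTzero i hTk
        simp [hTk, hu0, stmt19_vecState_apply]
      · simp only [hSk, hTk, if_false, LinearMap.smul_apply, smul_eq_mul,
          stmt19_vecState_apply]
        push_cast
        have hS' : (S i : ℂ) ≠ 0 := by exact_mod_cast hSk
        have hT' : (T i : ℂ) ≠ 0 := by exact_mod_cast hTk
        field_simp
end
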